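/- arXiv:2308.14859 — 2 statements merged into one kernel-verified Lean document; each statement's English description precedes it below -/
import Mathlib

section
/- For every real x with -3/8 ≤ x ≤ -0.3144, one has -1 - 8x > 0, 1 - 14x > 0, and the inequality (248x + 43)/(56x - 4) ≤ 5·√((-1-8x)/(2(1-14x))). -/
theorem check2_inequality (x : ℝ) (hx : -3/8 ≤ x) (hx' : x ≤ -0.3144) :
    0 < -1 - 8 * x ∧ 0 < 1 - 14 * x ∧
    (248 * x + 43) / (56 * x - 4) ≤
      5 * Real.sqrt ((-1 - 8 * x) / (2 * (1 - 14 * x))) := by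
  have hx2 : x ≤ -(0.3144 : ℝ) := by norm_num at hx' ⊢; linarith
  have h1 : 0 < -1 - 8 * x := by nlinarith
  have h2 : 0 < (1 : ℝ) - 14 * x := by nlinarith
  refine ⟨h1, h2, ?_⟩
  have ht : 0 ≤ (-1 - 8 * x) / (2 * (1 - 14 * x)) := by positivity
  have h5 : 5 * Real.sqrt ((-1 - 8 * x) / (2 * (1 - 14 * x)))
      = Real.sqrt (25 * ((-1 - 8 * x) / (2 * (1 - 14 * x)))) := by
    rw [Real.sqrt_mul (by norm_num), show Real.sqrt 25 = 5 by
      rw [show (25:ℝ) = 5 ^ 2 by norm_num, Real.sqrt_sq (by norm_num)]]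
  rw [h5]
  have hb : 56 * x - 4 < 0 := by nlinarith
  have hlhs : 0 ≤ (248 * x + 43) / (56 * x - 4) := by
    rw [div_nonneg_iff]; right; constructor <;> nlinarith
  rw [show (248 * x + 43) / (56 * x - 4) = Real.sqrt (((248 * x + 43) / (56 * x - 4)) ^ 2)
    from (Real.sqrt_sq hlhs).symm]
  apply Real.sqrt_le_sqrt
  rw [div_pow, ← mul_div_assoc, div_le_div_iff₀ (by nlinarith : (0:ℝ) < (56 * x - 4) ^ 2) (by positivity : (0:ℝ) < 2 * (1 - 14 * x))]
  have hq : 0 ≤ 136864 * x ^ 2 + 9348 * x - 1366 := by nlinarith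
  have h3 : 0 ≤ 8 * x + 3 := by linarith
  nlinarith [mul_nonneg h3 hq, sq_nonneg (56 * x - 4)]
end

section
/- The function g(x) = -17(8x+3)/(164x+49) is increasing on [-3/8, -0.3144], and the function h(x) = 2/(q_x - 4), where q_x = 2/(5√((-1-8x)/(2(1-14x))) - 1) + 2, is decreasing on (-3/8, -0.3144]; moreover g(-θ*) < h(-θ*) for θ* = 0.31448..., hence g(x) < h(x) throughout the interval. -/
open Set

noncomputable def gfun (x : ℝ) : ℝ := -17 * (8 * x + 3) / (164 * x + 49)

noncomputable def hfun (x : ℝ) : ℝ :=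
  2 / ((2 / (5 * Real.sqrt ((-1 - 8 * x) / (2 * (1 - 14 * x))) - 1) + 2) - 4)

lemma key_bounds {x : ℝ} (h1 : -3/8 < x) (h2 : x ≤ -0.3144) :
    0.374 < Real.sqrt ((-1 - 8 * x) / (2 * (1 - 14 * x))) ∧
      Real.sqrt ((-1 - 8 * x) / (2 * (1 - 14 * x))) < 2/5 := by
  have h2' : x ≤ -(393/1250 : ℝ) := by norm_num at h2 ⊢; linarith
  have hd : (0:ℝ) < 2 * (1 - 14 * x) := by nlinarith
  constructor
  · rw [Real.lt_sqrt (by norm_num), lt_div_iff₀ hd]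
    norm_num
    nlinarith
  · rw [Real.sqrt_lt' (by norm_num), div_lt_iff₀ hd]
    nlinarith

lemma gmono : StrictMonoOn gfun (Icc (-3/8 : ℝ) (-0.3144)) := by
  intro x hx y hy hxy
  obtain ⟨hx1, hx2⟩ := hx
  obtain ⟨hy1, hy2⟩ := hy
  norm_num at hx2 hy2
  have hdx : 164 * x + 49 < 0 := by nlinarith
  have hdy : 164 * y + 49 < 0 := by nlinarith
  have key : gfun y - gfun x = 1700 * (y - x) / ((164 * x + 49) * (164 * y + 49)) := by
    unfold gfun
    rw [div_sub_div _ _ (ne_of_lt hdy) (ne_of_lt hdx), div_eq_div_iff (mul_ne_zero (ne_of_lt hdy) (ne_of_lt hdx)) (mul_ne_zero (ne_of_lt hdx) (ne_of_lt hdy))]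
    ring
  have hpos : 0 < 1700 * (y - x) / ((164 * x + 49) * (164 * y + 49)) :=
    div_pos (by linarith) (by nlinarith)
  linarith

lemma hanti : StrictAntiOn hfun (Ioc (-3/8 : ℝ) (-0.3144)) := by
  intro x hx y hy hxy
  obtain ⟨hx1, hx2⟩ := hx
  obtain ⟨hy1, hy2⟩ := hy
  obtain ⟨hul, huu⟩ := key_bounds hx1 hx2
  obtain ⟨hvl, hvu⟩ := key_bounds hy1 hy2
  set u := Real.sqrt ((-1 - 8 * x) / (2 * (1 - 14 * x))) with hu
  set v := Real.sqrt ((-1 - 8 * y) / (2 * (1 - 14 * y))) with hv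
  have hul' : (374/1000 : ℝ) < u := by norm_num at hul; linarith
  have hvl' : (374/1000 : ℝ) < v := by norm_num at hvl; linarith
  have hx2' : x ≤ -(393/1250 : ℝ) := by norm_num at hx2; linarith
  have hy2' : y ≤ -(393/1250 : ℝ) := by norm_num at hy2; linarith
  have hdx : (0:ℝ) < 2 * (1 - 14 * x) := by nlinarith
  have hdy : (0:ℝ) < 2 * (1 - 14 * y) := by nlinarith
  have hslt : (-1 - 8 * y) / (2 * (1 - 14 * y)) < (-1 - 8 * x) / (2 * (1 - 14 * x)) := by
    rw [div_lt_div_iff₀ hdy hdx]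
    nlinarith
  have hvu2 : v < u :=
    Real.sqrt_lt_sqrt (div_nonneg (by nlinarith) (by linarith)) hslt
  have h5v : (0:ℝ) < 5 * v - 1 := by linarith
  have h5u : (0:ℝ) < 5 * u - 1 := by linarith
  have htx : 0 < 2 / (5 * u - 1) - 2 := by
    have : 2 < 2 / (5 * u - 1) := by
      rw [lt_div_iff₀ h5u]; nlinarith
    linarith
  have hcomp : 2 / (5 * u - 1) < 2 / (5 * v - 1) := by
    rw [div_lt_div_iff₀ h5u h5v]; nlinarith
  have hty : 0 < 2 / (5 * v - 1) - 2 := by linarith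
  show hfun y < hfun x
  unfold hfun
  rw [← hu, ← hv]
  have e1 : 2 / (5 * u - 1) + 2 - 4 = 2 / (5 * u - 1) - 2 := by ring
  have e2 : 2 / (5 * v - 1) + 2 - 4 = 2 / (5 * v - 1) - 2 := by ring
  rw [e1, e2, div_lt_div_iff₀ hty htx]
  nlinarith

lemma pointwise {z : ℝ} (hz1 : -3/8 < z) (hz2 : z ≤ -0.3144) : gfun z < hfun z := by
  obtain ⟨hul, huu⟩ := key_bounds hz1 hz2
  set u := Real.sqrt ((-1 - 8 * z) / (2 * (1 - 14 * z))) with hu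
  have hul' : (374/1000 : ℝ) < u := by norm_num at hul; linarith
  have hz2' : z ≤ -(393/1250 : ℝ) := by norm_num at hz2; linarith
  have h5u : (0:ℝ) < 5 * u - 1 := by linarith
  have htz : 0 < 2 / (5 * u - 1) - 2 := by
    have : 2 < 2 / (5 * u - 1) := by
      rw [lt_div_iff₀ h5u]; nlinarith
    linarith
  have htz2 : 2 / (5 * u - 1) - 2 < (3/10 : ℝ) := by
    have : 2 / (5 * u - 1) < (23/10 : ℝ) := by
      rw [div_lt_iff₀ h5u]; nlinarith
    linarith
  have hg : gfun z < (33/10 : ℝ) := by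
    unfold gfun
    have hdz : 164 * z + 49 < 0 := by nlinarith
    rw [div_lt_iff_of_neg hdz]
    nlinarith
  have hh : ((33:ℝ)/10) < hfun z := by
    unfold hfun
    rw [← hu]
    have e1 : 2 / (5 * u - 1) + 2 - 4 = 2 / (5 * u - 1) - 2 := by ring
    rw [e1, lt_div_iff₀ htz]
    nlinarith
  linarith

theorem check1_monotonicity :
    StrictMonoOn gfun (Icc (-3/8 : ℝ) (-0.3144)) ∧
    StrictAntiOn hfun (Ioc (-3/8 : ℝ) (-0.3144)) ∧
    gfun (-0.31448) < hfun (-0.31448) ∧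
    ∀ x ∈ Ioc (-3/8 : ℝ) (-0.3144), gfun x < hfun x := by
  exact ⟨gmono, hanti, pointwise (by norm_num) (by norm_num),
    fun x hx => pointwise hx.1 hx.2⟩
end
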